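/- Let S = {x ∈ ℝ^d : A(x) ⪰ 0} be a spectrahedral cone for a linear symmetric matrix map A, and let p be a point in the relative interior of S. Then the linear hull of S equals {x ∈ ℝ^d : ker A(p) ⊆ ker A(x)}. -/

import Mathlib

open Matrix

private lemma quad_continuous {n : ℕ} (M : Matrix (Fin n) (Fin n) ℝ) :
    Continuous (fun v : Fin n → ℝ => v ⬝ᵥ M *ᵥ v) := by
  simp only [dotProduct, mulVec]
  exact continuous_finset_sum _ fun i _ => (continuous_apply i).mul
    (continuous_finset_sum _ fun j _ => continuous_const.mul (continuous_apply j))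

private lemma isHermitian_of_isSymm {n : ℕ} {M : Matrix (Fin n) (Fin n) ℝ}
    (h : M.IsSymm) : M.IsHermitian := by
  ext i j
  simp only [conjTranspose_apply, star_trivial]
  exact (congrFun (congrFun h i) j).symm ▸ rfl

private lemma isSymm_of_isHermitian {n : ℕ} {M : Matrix (Fin n) (Fin n) ℝ}
    (h : M.IsHermitian) : M.IsSymm := by
  ext i j
  rw [transpose_apply]
  simpa using h.apply i j

private lemma quad_smul {n : ℕ} (M : Matrix (Fin n) (Fin n) ℝ) (c : ℝ) (v : Fin n → ℝ) :
    (c • v) ⬝ᵥ M *ᵥ (c • v) = c^2 * (v ⬝ᵥ M *ᵥ v) := by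
  rw [smul_dotProduct, mulVec_smul, dotProduct_smul, smul_eq_mul, smul_eq_mul]; ring

private lemma key_perturb {n : ℕ} {B C : Matrix (Fin n) (Fin n) ℝ}
    (hB : B.PosSemidef) (hC : C.IsSymm) (hker : ∀ v, B *ᵥ v = 0 → C *ᵥ v = 0) :
    ∃ ε : ℝ, 0 < ε ∧ (B + ε • C).PosSemidef := by
  obtain ⟨K, hK⟩ := Submodule.exists_isCompl (LinearMap.ker B.mulVecLin)
  set kerB := LinearMap.ker B.mulVecLin with hkerB
  set Q : (Fin n → ℝ) → ℝ := fun v => v ⬝ᵥ B *ᵥ v with hQ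
  set R : (Fin n → ℝ) → ℝ := fun v => v ⬝ᵥ C *ᵥ v with hR
  have hQc : Continuous Q := quad_continuous B
  have hRc : Continuous R := quad_continuous C
  have main : ∃ ε : ℝ, 0 < ε ∧ ∀ v1 ∈ K, 0 ≤ Q v1 + ε * R v1 := by
    set Sph : Set (Fin n → ℝ) := Metric.sphere 0 1 ∩ (K : Set (Fin n → ℝ)) with hSph
    have hcomp : IsCompact Sph :=
      (isCompact_sphere 0 1).inter_right (Submodule.closed_of_finiteDimensional K)
    rcases Sph.eq_empty_or_nonempty with he | hne
    · refine ⟨1, one_pos, fun v1 hv1 => ?_⟩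
      by_cases h0 : v1 = 0
      · simp [h0, hQ, hR]
      · exfalso
        have hu : ‖v1‖⁻¹ • v1 ∈ Sph := by
          constructor
          · simp [norm_smul, inv_mul_cancel₀ (norm_ne_zero_iff.mpr h0)]
          · exact K.smul_mem _ hv1
        rw [he] at hu; exact hu
    · obtain ⟨a, ha, hamin⟩ := hcomp.exists_isMinOn hne hQc.continuousOn
      obtain ⟨b, hb, hbmax⟩ := hcomp.exists_isMaxOn hne hRc.abs.continuousOn
      have ha0 : a ≠ 0 := by
        intro h; rw [h] at ha
        simpa using ha.1
      have hm : 0 < Q a := by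
        rcases lt_or_eq_of_le (hB.dotProduct_mulVec_nonneg a) with h | h
        · simpa [hQ] using h
        · exfalso
          have : B *ᵥ a = 0 := (hB.dotProduct_mulVec_zero_iff a).mp h.symm
          exact ha0 (Submodule.disjoint_def.mp hK.disjoint a this ha.2)
      have hM0 : 0 ≤ |R b| := abs_nonneg _
      have hd : (0:ℝ) < |R b| + 1 := by linarith
      have epos : 0 < Q a / (|R b| + 1) := div_pos hm hd
      refine ⟨Q a / (|R b| + 1), epos, fun v1 hv1 => ?_⟩
      by_cases h0 : v1 = 0
      · simp [h0, hQ, hR]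
      · set u := ‖v1‖⁻¹ • v1 with hu
        have hnu : ‖v1‖ ≠ 0 := norm_ne_zero_iff.mpr h0
        have huS : u ∈ Sph :=
          ⟨by simp [hu, norm_smul, inv_mul_cancel₀ hnu], K.smul_mem _ hv1⟩
        have hv1u : v1 = ‖v1‖ • u := by
          rw [hu, smul_smul, mul_inv_cancel₀ hnu, one_smul]
        have hQv : Q v1 = ‖v1‖^2 * Q u := by
          conv_lhs => rw [hv1u]
          exact quad_smul B _ u
        have hRv : R v1 = ‖v1‖^2 * R u := by
          conv_lhs => rw [hv1u]
          exact quad_smul C _ u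
        have h1 : Q a ≤ Q u := hamin huS
        have h2 : |R u| ≤ |R b| := hbmax huS
        have h3 : -(|R b|) ≤ R u := by
          have := neg_abs_le (R u); linarith [neg_le_neg h2]
        have he : Q a / (|R b| + 1) * (|R b| + 1) = Q a := div_mul_cancel₀ _ hd.ne'
        have hε : 0 ≤ Q u + Q a / (|R b| + 1) * R u := by
          nlinarith [mul_le_mul_of_nonneg_left h3 epos.le]
        rw [hQv, hRv]
        nlinarith [mul_nonneg (sq_nonneg ‖v1‖) hε]
  obtain ⟨ε, hε, hεK⟩ := main
  have hBs : Bᵀ = B := isSymm_of_isHermitian hB.1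
  have hXsT : (B + ε • C)ᵀ = B + ε • C := by
    rw [transpose_add, transpose_smul, hC, hBs]
  refine ⟨ε, hε, .of_dotProduct_mulVec_nonneg (isHermitian_of_isSymm hXsT) ?_⟩
  intro v
  obtain ⟨v0, v1, hsum, -⟩ := Submodule.existsUnique_add_of_isCompl hK v
  have hBv0 : B *ᵥ (v0 : Fin n → ℝ) = 0 := v0.2
  have hCv0 : C *ᵥ (v0 : Fin n → ℝ) = 0 := hker _ hBv0
  have hXv0 : (B + ε • C) *ᵥ (v0 : Fin n → ℝ) = 0 := by
    rw [add_mulVec, smul_mulVec, hBv0, hCv0, smul_zero, add_zero]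
  have hXv : (B + ε • C) *ᵥ v = (B + ε • C) *ᵥ (v1 : Fin n → ℝ) := by
    rw [← hsum, mulVec_add, hXv0, zero_add]
  have cross : (v0 : Fin n → ℝ) ⬝ᵥ (B + ε • C) *ᵥ (v1 : Fin n → ℝ) = 0 := by
    rw [dotProduct_mulVec, ← mulVec_transpose, hXsT, hXv0, zero_dotProduct]
  have : v ⬝ᵥ (B + ε • C) *ᵥ v = Q (v1 : Fin n → ℝ) + ε * R (v1 : Fin n → ℝ) := by
    rw [hXv]
    conv_lhs => rw [← hsum]
    rw [add_dotProduct, cross, zero_add, add_mulVec, smul_mulVec,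
      dotProduct_add, dotProduct_smul, smul_eq_mul]
  simpa [this] using hεK (v1 : Fin n → ℝ) v1.2

theorem linear_hull_of_spectrahedral_cone {d n : ℕ}
    (A : (Fin d → ℝ) →ₗ[ℝ] Matrix (Fin n) (Fin n) ℝ) (hA : ∀ x, (A x).IsSymm)
    (S : Set (Fin d → ℝ)) (hS : S = {x | (A x).PosSemidef})
    (p : Fin d → ℝ) (hp : p ∈ intrinsicInterior ℝ S) :
    (Submodule.span ℝ S : Set (Fin d → ℝ)) =
      {x | ∀ v : Fin n → ℝ, A p *ᵥ v = 0 → A x *ᵥ v = 0} := by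
  have hpS : p ∈ S := intrinsicInterior_subset hp
  have hpP : (A p).PosSemidef := by rw [hS] at hpS; exact hpS
  apply Set.Subset.antisymm
  · -- span S ⊆ RHS
    set T : Submodule ℝ (Fin d → ℝ) :=
      { carrier := {x | ∀ v : Fin n → ℝ, A p *ᵥ v = 0 → A x *ᵥ v = 0}
        add_mem' := fun {a b} ha hb v hv => by
          rw [map_add, add_mulVec, ha v hv, hb v hv, add_zero]
        zero_mem' := fun v hv => by rw [map_zero, zero_mulVec]
        smul_mem' := fun c a ha v hv => by
          rw [_root_.map_smul, smul_mulVec, ha v hv, smul_zero] } with hT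
    have hsub : S ⊆ (T : Set (Fin d → ℝ)) := by
      intro x hx v hv
      -- find t > 0 with t • (p - x) + p ∈ S
      have hxP : (A x).PosSemidef := by rw [hS] at hx; exact hx
      have hpE : p ∈ affineSpan ℝ S := subset_affineSpan ℝ S hpS
      have hxE : x ∈ affineSpan ℝ S := subset_affineSpan ℝ S hx
      obtain ⟨y, hy, hyp⟩ := mem_intrinsicInterior.mp hp
      set f : ℝ → affineSpan ℝ S := fun t =>
        ⟨t • (p - x) + p, by
          simpa [vsub_eq_sub, vadd_eq_add] using
            (affineSpan ℝ S).smul_vsub_vadd_mem t hpE hxE hpE⟩ with hf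
      have hfc : Continuous f := by
        apply Continuous.subtype_mk
        exact (continuous_id.smul continuous_const).add continuous_const
      have hf0 : f 0 = y := by
        apply Subtype.ext
        simp [hf, hyp]
      have hnb : f ⁻¹' (interior ((↑) ⁻¹' S : Set (affineSpan ℝ S))) ∈ nhds (0:ℝ) := by
        apply (isOpen_interior.preimage hfc).mem_nhds
        rw [Set.mem_preimage, hf0]; exact hy
      obtain ⟨δ, hδ, hball⟩ := Metric.mem_nhds_iff.mp hnb
      have htmem : (δ/2) • (p - x) + p ∈ S := by
        have : f (δ/2) ∈ interior ((↑) ⁻¹' S : Set (affineSpan ℝ S)) := by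
          apply hball
          rw [Metric.mem_ball, Real.dist_eq, sub_zero, abs_of_pos (half_pos hδ)]
          exact half_lt_self hδ
        have h2 := interior_subset this
        exact h2
      have htP : (A ((δ/2) • (p - x) + p)).PosSemidef := by rw [hS] at htmem; exact htmem
      -- compute the quadratic forms
      have hw1 : 0 ≤ v ⬝ᵥ A x *ᵥ v := by simpa using hxP.dotProduct_mulVec_nonneg v
      have hmv : A ((δ/2) • (p - x) + p) *ᵥ v = (-(δ/2)) • (A x *ᵥ v) := by
        rw [map_add, _root_.map_smul, map_sub, add_mulVec, smul_mulVec, sub_mulVec, hv]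
        simp
      have hw2 : 0 ≤ -(δ/2) * (v ⬝ᵥ A x *ᵥ v) := by
        have h := htP.dotProduct_mulVec_nonneg v
        rw [hmv] at h
        simpa [dotProduct_smul, smul_eq_mul] using h
      have hzero : v ⬝ᵥ A x *ᵥ v = 0 := by nlinarith
      have := (hxP.dotProduct_mulVec_zero_iff v).mp (by simpa using hzero)
      exact this
    exact Submodule.span_le.mpr hsub
  · -- RHS ⊆ span S
    intro x hx
    obtain ⟨ε, hε, hP⟩ := key_perturb hpP (hA x) hx
    have hmem : p + ε • x ∈ S := by
      rw [hS]
      show (A (p + ε • x)).PosSemidef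
      rw [map_add, _root_.map_smul]
      exact hP
    have h1 : p + ε • x ∈ Submodule.span ℝ S := Submodule.subset_span hmem
    have h2 : p ∈ Submodule.span ℝ S := Submodule.subset_span hpS
    have hxe : x = ε⁻¹ • (p + ε • x - p) := by
      rw [add_sub_cancel_left, smul_smul, inv_mul_cancel₀ hε.ne', one_smul]
    rw [hxe]
    exact Submodule.smul_mem _ _ (Submodule.sub_mem _ h1 h2)
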